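/- Let 0 < q < p < ∞, 0 < r ≤ 1, and let {x_k}_{k=N}^∞ be a discretizing sequence of W = ∫_·^b w. With V_r(x,y) = (∫_x^y v^{1/(1−r)})^{(1−r)/r} for r < 1 and V_r(x,y) = ess sup_{(x,y)} v for r = 1, one has for each k ≥ N+1: sup_{N+1 ≤ i ≤ k} 2^{iq/(p−q)} V_r(x_{i−1}, x_i)^{pq/(p−q)} ≈ ess sup_{t ∈ (a, x_k)} W(t)^{−q/(p−q)} V_r(t, x_k)^{pq/(p−q)}. -/

import Mathlib

open MeasureTheory Set ENNReal

/-- The interval `(x, y)` in `ℝ` with extended-real endpoints. -/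
def erIoo (x y : EReal) : Set ℝ := {t : ℝ | x < (t : EReal) ∧ (t : EReal) < y}

/-- `W(x) = ∫_x^b w`. -/
noncomputable def Wf (w : ℝ → ℝ≥0∞) (b : EReal) (x : ℝ) : ℝ≥0∞ :=
  ∫⁻ t in erIoo (x : EReal) b, w t

/-- The quantity `V_r(x,y)`: `(∫_x^y v^{1/(1-r)})^{(1-r)/r}` when `r < 1`, and
`ess sup_{(x,y)} v` when `r = 1`. -/
noncomputable def Vr (r : ℝ) (v : ℝ → ℝ≥0∞) (x : ℝ) (y : EReal) : ℝ≥0∞ :=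
  if r = 1 then essSup v (volume.restrict (erIoo (x : EReal) y))
  else (∫⁻ s in erIoo (x : EReal) y, v s ^ (1 / (1 - r))) ^ ((1 - r) / r)

lemma le_essSup_of_meas_pos {α : Type*} [MeasurableSpace α] {μ : Measure α} {f : α → ℝ≥0∞} {lam : ℝ≥0∞}
    (h : μ {t | lam < f t} ≠ 0) : lam ≤ essSup f μ := by
  by_contra hc
  push_neg at hc
  apply h
  refine measure_mono_null ?_ (meas_essSup_lt (f := f) (μ := μ))
  intro t ht; exact lt_trans hc ht

lemma essSup_le_of_null {α : Type*} [MeasurableSpace α] {μ : Measure α} {f : α → ℝ≥0∞} {lam : ℝ≥0∞}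
    (h : μ {t | lam < f t} = 0) : essSup f μ ≤ lam := by
  refine essSup_le_of_ae_le lam ?_
  rw [Filter.EventuallyLE, ae_iff]
  simpa [not_le] using h

lemma geom_sum_Icc_le (x : ℝ≥0∞) (i k : ℤ) :
    ∑ j ∈ Finset.Icc i k, x ^ (j - i).toNat ≤ (1 - x)⁻¹ := by
  have hinj : ∀ j1 ∈ Finset.Icc i k, ∀ j2 ∈ Finset.Icc i k,
      (j1 - i).toNat = (j2 - i).toNat → j1 = j2 := by
    intro j1 h1 j2 h2 h
    simp only [Finset.mem_Icc] at h1 h2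
    omega
  rw [← Finset.sum_image (g := fun j : ℤ => (j - i).toNat) (f := fun n : ℕ => x ^ n) hinj]
  exact (ENNReal.sum_le_tsum _).trans (le_of_eq (ENNReal.tsum_geometric x))

lemma erIoo_coe (x y : ℝ) : erIoo (x : EReal) (y : EReal) = Set.Ioo x y := by
  ext t; simp [erIoo, Set.mem_Ioo, EReal.coe_lt_coe_iff]

lemma erIoo_subset_left {x x' : ℝ} (h : x ≤ x') (y : EReal) :
    erIoo (x' : EReal) y ⊆ erIoo (x : EReal) y := fun t ht =>
  ⟨lt_of_le_of_lt (EReal.coe_le_coe_iff.2 h) ht.1, ht.2⟩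

lemma Wf_anti (w : ℝ → ℝ≥0∞) (b : EReal) : Antitone (Wf w b) := fun s u h =>
  lintegral_mono_set (erIoo_subset_left h b)

lemma Vr_anti (r : ℝ) (hr0 : 0 < r) (hr1 : r ≤ 1) (v : ℝ → ℝ≥0∞) {x x' : ℝ} (h : x ≤ x')
    (y : EReal) : Vr r v x' y ≤ Vr r v x y := by
  unfold Vr
  split
  · exact essSup_mono_measure (Measure.absolutelyContinuous_of_le
      (Measure.restrict_mono (erIoo_subset_left h y) le_rfl))
  · exact ENNReal.rpow_le_rpow (lintegral_mono_set (erIoo_subset_left h y))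
      (div_nonneg (by linarith) hr0.le)

lemma Vr_mono_right (r : ℝ) (hr0 : 0 < r) (hr1 : r ≤ 1) (v : ℝ → ℝ≥0∞) (x : ℝ) {y y' : EReal}
    (h : y ≤ y') : Vr r v x y ≤ Vr r v x y' := by
  have hsub : erIoo (x : EReal) y ⊆ erIoo (x : EReal) y' := fun t ht => ⟨ht.1, lt_of_lt_of_le ht.2 h⟩
  unfold Vr
  split
  · exact essSup_mono_measure (Measure.absolutelyContinuous_of_le
      (Measure.restrict_mono hsub le_rfl))
  · exact ENNReal.rpow_le_rpow (lintegral_mono_set hsub) (div_nonneg (by linarith) hr0.le)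

lemma rpow_neg_anti {x y : ℝ≥0∞} (h : x ≤ y) {β : ℝ} (hβ : 0 ≤ β) : y ^ (-β) ≤ x ^ (-β) := by
  rw [ENNReal.rpow_neg, ENNReal.rpow_neg]
  exact ENNReal.inv_le_inv.2 (ENNReal.rpow_le_rpow h hβ)

lemma two_rpow_mul_two_rpow (s t : ℝ) : (2:ℝ≥0∞) ^ s * 2 ^ t = 2 ^ (s + t) :=
  (ENNReal.rpow_add s t two_ne_zero ENNReal.ofNat_ne_top).symm

lemma Ioo_eq_iUnion_Ioo {x0 x1 : ℝ} (h : x0 < x1) :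
    Ioo x0 x1 = ⋃ n : ℕ, Ioo (x0 + (x1 - x0) / (n + 2)) x1 := by
  ext t
  simp only [Set.mem_Ioo, Set.mem_iUnion]
  constructor
  · rintro ⟨ht0, ht1⟩
    obtain ⟨n, hn⟩ := exists_nat_gt ((x1 - x0) / (t - x0))
    refine ⟨n, ?_, ht1⟩
    have htx : 0 < t - x0 := by linarith
    rw [div_lt_iff₀ htx] at hn
    have h2 : (x1 - x0) / ((n : ℝ) + 2) < t - x0 := by
      rw [div_lt_iff₀ (by positivity)]
      nlinarith [htx.le]
    linarith
  · rintro ⟨n, hn0, hn1⟩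
    have : 0 < (x1 - x0) / ((n : ℝ) + 2) := div_pos (by linarith) (by positivity)
    exact ⟨by linarith, hn1⟩

lemma mono_Ioo_seq {x0 x1 : ℝ} (h : x0 < x1) :
    Monotone (fun n : ℕ => Ioo (x0 + (x1 - x0) / (n + 2)) x1) := by
  intro n m hnm
  apply Set.Ioo_subset_Ioo_left
  have : (x1 - x0) / ((m : ℝ) + 2) ≤ (x1 - x0) / ((n : ℝ) + 2) := by
    apply div_le_div_of_nonneg_left (by linarith) (by positivity)
    exact_mod_cast by omega
  linarith

lemma tn_mem {x0 x1 : ℝ} (h : x0 < x1) (n : ℕ) : x0 + (x1 - x0) / (n + 2) ∈ Ioo x0 x1 := by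
  constructor
  · have : 0 < (x1 - x0) / ((n : ℝ) + 2) := div_pos (by linarith) (by positivity)
    linarith
  · have : (x1 - x0) / ((n : ℝ) + 2) < x1 - x0 := by
      apply div_lt_self (by linarith) (by { have : (0:ℝ) ≤ n := Nat.cast_nonneg n; linarith })
    linarith

/-- Left-approximation: any value below `Vr r v x0 x1 ^ ρ` is exceeded at some interior point. -/
lemma Vr_left_approx {r : ℝ} (hr0 : 0 < r) (hr1 : r ≤ 1) {v : ℝ → ℝ≥0∞} (hv : Measurable v)
    {x0 x1 : ℝ} (h : x0 < x1) {ρ : ℝ} (hρ : 0 < ρ) {lam : ℝ≥0∞}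
    (hlam : lam < Vr r v x0 ((x1 : ℝ) : EReal) ^ ρ) :
    ∃ ts ∈ Ioo x0 x1, lam < Vr r v ts ((x1 : ℝ) : EReal) ^ ρ := by
  set t : ℕ → ℝ := fun n => x0 + (x1 - x0) / (n + 2) with ht
  have key : Vr r v x0 ((x1 : ℝ) : EReal) ≤ ⨆ n : ℕ, Vr r v (t n) ((x1 : ℝ) : EReal) := by
    by_cases hr : r = 1
    · -- essSup case
      simp only [Vr, if_pos hr, erIoo_coe]
      set L := ⨆ n : ℕ, essSup v (volume.restrict (Ioo (t n) x1)) with hL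
      refine essSup_le_of_null ?_
      rw [Measure.restrict_apply' measurableSet_Ioo, Ioo_eq_iUnion_Ioo h,
        Set.inter_iUnion]
      refine measure_iUnion_null fun n => ?_
      have hn : essSup v (volume.restrict (Ioo (t n) x1)) ≤ L :=
        le_iSup (fun n => essSup v (volume.restrict (Ioo (t n) x1))) n
      have : {t_1 | L < v t_1} ∩ Ioo (t n) x1 ⊆
          {t_1 | essSup v (volume.restrict (Ioo (t n) x1)) < v t_1} ∩ Ioo (t n) x1 :=
        Set.inter_subset_inter_left _ (fun s hs => lt_of_le_of_lt hn hs)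
      refine measure_mono_null this ?_
      rw [← Measure.restrict_apply' measurableSet_Ioo]
      exact meas_essSup_lt
    · -- integral case
      have hr' : r < 1 := lt_of_le_of_ne hr1 hr
      simp only [Vr, if_neg hr, erIoo_coe]
      set ν := volume.withDensity (fun s => v s ^ (1 / (1 - r))) with hν
      have happ : ∀ s : ℝ, (∫⁻ u in Ioo s x1, v u ^ (1 / (1 - r))) = ν (Ioo s x1) := by
        intro s
        rw [hν, withDensity_apply _ measurableSet_Ioo]
      rw [happ]
      simp_rw [happ]
      have hdir : ν (Ioo x0 x1) = ⨆ n : ℕ, ν (Ioo (t n) x1) := by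
        rw [Ioo_eq_iUnion_Ioo h]
        exact Directed.measure_iUnion (mono_Ioo_seq h).directed_le
      rw [hdir]
      -- (⨆ a_n) ^ σ ≤ ⨆ (a_n ^ σ)
      have hmono : Monotone (fun n : ℕ => ν (Ioo (t n) x1)) := fun n m hnm =>
        measure_mono (mono_Ioo_seq h hnm)
      exact le_of_eq (Monotone.map_iSup_of_continuousAt
          (ENNReal.continuous_rpow_const.continuousAt)
          (fun a b hab => ENNReal.rpow_le_rpow hab (div_nonneg (by linarith) hr0.le))
          (by
            have hpos : (0:ℝ) < (1 - r) / r := div_pos (by linarith) hr0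
            simp [ENNReal.zero_rpow_of_pos hpos]))
  have h1 : lam ^ (1 / ρ) < Vr r v x0 ((x1 : ℝ) : EReal) := by
    have h2 := ENNReal.rpow_lt_rpow hlam (by positivity : (0:ℝ) < 1 / ρ)
    rwa [← ENNReal.rpow_mul, mul_one_div, div_self hρ.ne', ENNReal.rpow_one] at h2
  obtain ⟨n, hn⟩ := lt_iSup_iff.1 (lt_of_lt_of_le h1 key)
  refine ⟨t n, tn_mem h n, ?_⟩
  have h3 := ENNReal.rpow_lt_rpow hn hρ
  rwa [← ENNReal.rpow_mul, one_div, inv_mul_cancel₀ hρ.ne', ENNReal.rpow_one] at h3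

lemma essSup_piece_ge {r : ℝ} (hr0 : 0 < r) (hr1 : r ≤ 1) {v : ℝ → ℝ≥0∞} (hv : Measurable v)
    {x0 x1 : ℝ} (h : x0 < x1) {ρ : ℝ} (hρ : 0 < ρ) :
    Vr r v x0 ((x1 : ℝ) : EReal) ^ ρ ≤
      essSup (fun t => Vr r v t ((x1 : ℝ) : EReal) ^ ρ) (volume.restrict (Ioo x0 x1)) := by
  refine le_of_forall_lt_imp_le_of_dense fun lam hlam => ?_
  obtain ⟨ts, hts, hlt⟩ := Vr_left_approx hr0 hr1 hv h hρ hlam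
  apply le_essSup_of_meas_pos
  rw [Measure.restrict_apply' measurableSet_Ioo]
  have hsub : Ioo x0 ts ⊆ {s | lam < Vr r v s ((x1 : ℝ) : EReal) ^ ρ} ∩ Ioo x0 x1 := by
    intro s hs
    refine ⟨lt_of_lt_of_le hlt (ENNReal.rpow_le_rpow (Vr_anti r hr0 hr1 v hs.2.le _) hρ.le),
      hs.1, lt_trans hs.2 hts.2⟩
  have hpos : (0 : ℝ≥0∞) < volume (Ioo x0 ts) := by
    rw [Real.volume_Ioo]
    exact ENNReal.ofReal_pos.2 (by linarith [hts.1])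
  exact (lt_of_lt_of_le hpos (measure_mono hsub)).ne'

lemma two_rpow_ne_top (s : ℝ) : (2:ℝ≥0∞) ^ s ≠ ⊤ := by
  rw [Ne, ENNReal.rpow_eq_top_iff]
  rintro (⟨h, _⟩ | ⟨h, _⟩) <;> norm_num at h

lemma ofReal_mul_two_rpow {c : ℝ} (hc : 0 < c) (s e : ℝ) :
    (ENNReal.ofReal c * (2:ℝ≥0∞) ^ s) ^ e = ENNReal.ofReal (c ^ e) * (2:ℝ≥0∞) ^ (s * e) := by
  rw [ENNReal.mul_rpow_of_ne_top ENNReal.ofReal_ne_top (two_rpow_ne_top s),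
    ENNReal.ofReal_rpow_of_pos hc, ← ENNReal.rpow_mul]

theorem disc_sup_esssup_equiv (p q r c₁ c₂ : ℝ)
    (hq : 0 < q) (hqp : q < p) (hr0 : 0 < r) (hr1 : r ≤ 1) (hc₁ : 0 < c₁) (hc₂ : 0 < c₂) :
    ∃ c C : ℝ, 0 < c ∧ 0 < C ∧
      ∀ (a : ℝ) (b : EReal), (a : EReal) < b → ∀ (v w : ℝ → ℝ≥0∞),
        Measurable v → Measurable w →
        ∀ (N : WithBot ℤ) (xs : ℤ → ℝ),
        (∀ x : ℝ, x ∈ erIoo (a : EReal) b → 0 < Wf w b x ∧ Wf w b x < ∞) →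
        (∀ k : ℤ, N ≤ (k : WithBot ℤ) → a ≤ xs k ∧ (xs k : EReal) ≤ b) →
        (∀ j k : ℤ, N ≤ (j : WithBot ℤ) → j < k → xs j < xs k) →
        (∀ k : ℤ, N ≤ (k : WithBot ℤ) →
          ENNReal.ofReal c₁ * (2 : ℝ≥0∞) ^ (-(k : ℝ)) ≤ Wf w b (xs k) ∧
            Wf w b (xs k) ≤ ENNReal.ofReal c₂ * (2 : ℝ≥0∞) ^ (-(k : ℝ))) →
        (∀ n : ℤ, N = (n : WithBot ℤ) → xs n = a) →
        ∀ k : ℤ, N < (k : WithBot ℤ) →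
          ENNReal.ofReal c *
              essSup (fun t => Wf w b t ^ (-(q / (p - q))) *
                  Vr r v t ((xs k : ℝ) : EReal) ^ (p * q / (p - q)))
                (volume.restrict (Set.Ioo a (xs k))) ≤
            (⨆ i : {i : ℤ // N < (i : WithBot ℤ) ∧ i ≤ k},
              (2 : ℝ≥0∞) ^ (((i : ℤ) : ℝ) * q / (p - q)) *
                Vr r v (xs ((i : ℤ) - 1)) ((xs i : ℝ) : EReal) ^ (p * q / (p - q))) ∧
          (⨆ i : {i : ℤ // N < (i : WithBot ℤ) ∧ i ≤ k},
            (2 : ℝ≥0∞) ^ (((i : ℤ) : ℝ) * q / (p - q)) *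
              Vr r v (xs ((i : ℤ) - 1)) ((xs i : ℝ) : EReal) ^ (p * q / (p - q))) ≤
            ENNReal.ofReal C *
              essSup (fun t => Wf w b t ^ (-(q / (p - q))) *
                  Vr r v t ((xs k : ℝ) : EReal) ^ (p * q / (p - q)))
                (volume.restrict (Set.Ioo a (xs k))) := by
  have hpq : (0:ℝ) < p - q := by linarith
  have hp : (0:ℝ) < p := lt_trans hq hqp
  set β : ℝ := q / (p - q) with hβdef
  have hβ0 : 0 < β := div_pos hq hpq
  have hρ0 : 0 < p * β := mul_pos hp hβ0
  set τ : ℝ := (1 - r) / r * (p * β) with hτdef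
  have hτpos : r ≠ 1 → 0 < τ := fun hr =>
    mul_pos (div_pos (by linarith [lt_of_le_of_ne hr1 hr]) hr0) hρ0
  set G : ℝ := if r = 1 then 1 else ((1 - (2:ℝ) ^ (-(β / τ)))⁻¹) ^ τ with hGdef
  have hzlt1 : r ≠ 1 → (2:ℝ) ^ (-(β / τ)) < 1 := fun hr =>
    Real.rpow_lt_one_of_one_lt_of_neg one_lt_two (neg_lt_zero.2 (div_pos hβ0 (hτpos hr)))
  have hzpos : (0:ℝ) < (2:ℝ) ^ (-(β / τ)) := Real.rpow_pos_of_pos two_pos _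
  have hG0 : 0 < G := by
    rw [hGdef]
    split
    · norm_num
    · next hr => exact Real.rpow_pos_of_pos (inv_pos.2 (by linarith [hzlt1 hr])) τ
  set K : ℝ := c₁ ^ (-β) * G with hKdef
  have hK0 : 0 < K := mul_pos (Real.rpow_pos_of_pos hc₁ _) hG0
  refine ⟨K⁻¹, c₂ ^ β * 2 ^ β, inv_pos.2 hK0,
    mul_pos (Real.rpow_pos_of_pos hc₂ _) (Real.rpow_pos_of_pos two_pos _), ?_⟩
  intro a b hab v w hv hw N xs hW hrange hstrict hWx h0 k hk
  have hmd : ∀ x : ℝ, x * q / (p - q) = x * β := fun x => mul_div_assoc x q (p - q)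
  simp only [hmd]
  set ρ : ℝ := p * β with hρdef
  -- basic facts about the grid
  have hbk : ((xs k : ℝ) : EReal) ≤ b := (hrange k hk.le).2
  have mono : ∀ j₁ j₂ : ℤ, N ≤ (j₁ : WithBot ℤ) → j₁ ≤ j₂ → xs j₁ ≤ xs j₂ := by
    intro j₁ j₂ h1 h2
    rcases eq_or_lt_of_le h2 with rfl | hlt
    · exact le_rfl
    · exact (hstrict j₁ j₂ h1 hlt).le
  have hNlt : ∀ {j : ℤ}, N < (j : WithBot ℤ) → N ≤ ((j - 1 : ℤ) : WithBot ℤ) := by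
    intro j hj
    cases N with
    | bot => exact bot_le
    | coe n =>
      refine WithBot.coe_le_coe.2 ?_
      have := WithBot.coe_lt_coe.1 hj
      omega
  have cover : ∀ m0 : ℤ, N ≤ (m0 : WithBot ℤ) → ∀ t : ℝ, xs m0 ≤ t → t < xs k →
      ∃ j : ℤ, m0 < j ∧ j ≤ k ∧ xs (j - 1) ≤ t ∧ t < xs j := by
    intro m0 hm0 t ht0 htk
    have hm0k : m0 ≤ k := by
      by_contra hc
      push_neg at hc
      exact absurd (le_trans (mono k m0 hk.le hc.le) ht0) (not_le.2 htk)
    obtain ⟨j, ⟨hj0, hjk, hjt⟩, hmax⟩ := Int.exists_greatest_of_bdd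
      (P := fun m => m0 ≤ m ∧ m ≤ k ∧ xs m ≤ t) ⟨k, fun z hz => hz.2.1⟩ ⟨m0, le_rfl, hm0k, ht0⟩
    have hjk' : j < k := lt_of_le_of_ne hjk (by rintro rfl; exact absurd hjt (not_le.2 htk))
    refine ⟨j + 1, by omega, by omega, by simpa using hjt, ?_⟩
    by_contra hc
    push_neg at hc
    have := hmax (j + 1) ⟨by omega, by omega, hc⟩
    omega
  have start : ∀ t : ℝ, a < t → t < xs k → ∃ m0 : ℤ, N ≤ (m0 : WithBot ℤ) ∧ xs m0 ≤ t := by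
    intro t hat htk
    have htb : (t : EReal) < b :=
      lt_of_lt_of_le (EReal.coe_lt_coe_iff.2 htk) hbk
    have htW : Wf w b t < ∞ := (hW t ⟨EReal.coe_lt_coe_iff.2 hat, htb⟩).2
    cases N with
    | bot =>
      have hfin : Wf w b t / ENNReal.ofReal c₁ ≠ ⊤ := by
        rw [Ne, ENNReal.div_eq_top]
        push_neg
        exact ⟨fun _ => by simp [ENNReal.ofReal_eq_zero]; linarith, fun h => absurd h htW.ne⟩
      obtain ⟨n, hn⟩ := ENNReal.exists_nat_gt hfin
      set m : ℤ := -(n : ℤ) with hm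
      refine ⟨m, bot_le, ?_⟩
      by_contra hc
      push_neg at hc
      have h1 : Wf w b (xs m) ≤ Wf w b t := Wf_anti w b hc.le
      have h2 := (hWx m bot_le).1
      have h3 : ((n:ℝ≥0∞)) ≤ (2:ℝ≥0∞) ^ (-(m : ℝ)) := by
        have he : (-(m : ℝ)) = ((n : ℕ) : ℝ) := by rw [hm]; push_cast; ring
        rw [he, ENNReal.rpow_natCast]
        calc ((n:ℝ≥0∞)) ≤ ((2^n : ℕ) : ℝ≥0∞) := by exact_mod_cast (Nat.lt_two_pow_self (n := n)).le
        _ = (2:ℝ≥0∞) ^ n := by push_cast; ring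
      have h4 : (n : ℝ≥0∞) * ENNReal.ofReal c₁ ≤ Wf w b t := by
        calc (n : ℝ≥0∞) * ENNReal.ofReal c₁ ≤ (2:ℝ≥0∞) ^ (-(m : ℝ)) * ENNReal.ofReal c₁ :=
          mul_le_mul_left h3 _
        _ = ENNReal.ofReal c₁ * (2:ℝ≥0∞) ^ (-(m : ℝ)) := mul_comm _ _
        _ ≤ Wf w b (xs m) := h2
        _ ≤ Wf w b t := h1
      have h5 : (n : ℝ≥0∞) ≤ Wf w b t / ENNReal.ofReal c₁ :=
        (ENNReal.le_div_iff_mul_le (Or.inl (by simp [ENNReal.ofReal_eq_zero]; linarith))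
          (Or.inl ENNReal.ofReal_ne_top)).2 h4
      exact absurd h5 (not_le.2 hn)
    | coe n =>
      exact ⟨n, le_rfl, by rw [h0 n rfl]; exact hat.le⟩
  have decomp : ∀ j : ℤ, N < (j : WithBot ℤ) → j ≤ k →
      Ioo (xs (j - 1)) (xs k) ⊆
        (⋃ m ∈ Finset.Icc j k, Ioo (xs (m - 1)) (xs m)) ∪
          (↑((Finset.Icc j k).image xs) : Set ℝ) := by
    intro j hNj hjk t ht
    obtain ⟨m, hjm, hmk, hm1, hm2⟩ := cover (j - 1) (hNlt hNj) t ht.1.le ht.2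
    rcases eq_or_lt_of_le hm1 with heq | hlt
    · refine Or.inr ?_
      simp only [Finset.coe_image, Set.mem_image, Finset.mem_coe, Finset.mem_Icc]
      refine ⟨m - 1, ⟨by
        rcases eq_or_lt_of_le (show j - 1 + 1 ≤ m from hjm) with h' | h'
        · exfalso; rw [← h'] at heq; simp at heq; rw [← heq] at ht; exact lt_irrefl _ ht.1
        · omega, by omega⟩, heq⟩
    · exact Or.inl (Set.mem_biUnion (Finset.mem_Icc.2 ⟨by omega, hmk⟩) ⟨hlt, hm2⟩)
  set D := ⨆ i : {i : ℤ // N < (i : WithBot ℤ) ∧ i ≤ k},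
      (2:ℝ≥0∞) ^ (((i : ℤ) : ℝ) * β) * Vr r v (xs ((i : ℤ) - 1)) ((xs (i : ℤ) : ℝ) : EReal) ^ ρ
    with hD
  have hpiece : ∀ j : ℤ, N < (j : WithBot ℤ) → j ≤ k →
      Vr r v (xs (j - 1)) ((xs j : ℝ) : EReal) ^ ρ ≤ 2 ^ (-(j : ℝ) * β) * D := by
    intro j hNj hjk
    have hle : (2:ℝ≥0∞) ^ ((j : ℝ) * β) * Vr r v (xs (j - 1)) ((xs j : ℝ) : EReal) ^ ρ ≤ D :=
      le_iSup (fun i : {i : ℤ // N < (i : WithBot ℤ) ∧ i ≤ k} =>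
        (2:ℝ≥0∞) ^ (((i : ℤ) : ℝ) * β) * Vr r v (xs ((i : ℤ) - 1)) ((xs (i : ℤ) : ℝ) : EReal) ^ ρ)
        ⟨j, hNj, hjk⟩
    calc Vr r v (xs (j - 1)) ((xs j : ℝ) : EReal) ^ ρ
        = 2 ^ (-(j:ℝ) * β) * (2 ^ ((j:ℝ) * β) * Vr r v (xs (j - 1)) ((xs j : ℝ) : EReal) ^ ρ) := by
          rw [← mul_assoc, two_rpow_mul_two_rpow, neg_mul, neg_add_cancel, ENNReal.rpow_zero,
            one_mul]
      _ ≤ 2 ^ (-(j:ℝ) * β) * D := mul_le_mul_right hle _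
  have hGne : ENNReal.ofReal G ≠ 0 := by simp [ENNReal.ofReal_eq_zero]; linarith
  have main : ∀ j : ℤ, N < (j : WithBot ℤ) → j ≤ k →
      (2:ℝ≥0∞) ^ ((j : ℝ) * β) * Vr r v (xs (j - 1)) ((xs k : ℝ) : EReal) ^ ρ ≤
        ENNReal.ofReal G * D := by
    intro j hNj hjk
    by_cases hDt : D = ⊤
    · rw [hDt, ENNReal.mul_top hGne]; exact le_top
    rcases eq_or_ne r 1 with hr | hr
    · -- r = 1 : essSup case
      set M := ((2:ℝ≥0∞) ^ (-(j:ℝ) * β) * D) ^ (1 / ρ) with hM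
      have hpieceM : ∀ m : ℤ, N < (m : WithBot ℤ) → m ≤ k → j ≤ m →
          essSup v (volume.restrict (Ioo (xs (m - 1)) (xs m))) ≤ M := by
        intro m hNm hmk hjm
        have h1 := hpiece m hNm hmk
        rw [Vr, if_pos hr, erIoo_coe] at h1
        have hmj : (j : ℝ) ≤ (m : ℝ) := by exact_mod_cast hjm
        calc essSup v (volume.restrict (Ioo (xs (m - 1)) (xs m)))
            = (essSup v (volume.restrict (Ioo (xs (m - 1)) (xs m))) ^ ρ) ^ (1 / ρ) := by
              rw [← ENNReal.rpow_mul, mul_one_div, div_self hρ0.ne', ENNReal.rpow_one]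
          _ ≤ ((2:ℝ≥0∞) ^ (-(m:ℝ) * β) * D) ^ (1 / ρ) :=
              ENNReal.rpow_le_rpow h1 (by positivity)
          _ ≤ M := ENNReal.rpow_le_rpow (mul_le_mul_left
              (ENNReal.rpow_le_rpow_of_exponent_le one_le_two (by nlinarith)) D) (by positivity)
      have hbig : essSup v (volume.restrict (Ioo (xs (j - 1)) (xs k))) ≤ M := by
        apply essSup_le_of_null
        rw [Measure.restrict_apply' measurableSet_Ioo]
        have hsub : {s | M < v s} ∩ Ioo (xs (j - 1)) (xs k) ⊆
            (⋃ m ∈ Finset.Icc j k, {s | M < v s} ∩ Ioo (xs (m - 1)) (xs m)) ∪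
              (↑((Finset.Icc j k).image xs) : Set ℝ) := by
          rintro s ⟨hMs, hsIoo⟩
          rcases decomp j hNj hjk hsIoo with h | h
          · simp only [Set.mem_iUnion] at h ⊢
            obtain ⟨m, hm, hmem⟩ := h
            exact Or.inl (Set.mem_biUnion hm ⟨hMs, hmem⟩)
          · exact Or.inr h
        refine measure_mono_null hsub (measure_union_null ?_ ?_)
        · refine measure_biUnion_null_iff (Finset.countable_toSet _) |>.2 fun m hm => ?_
          simp only [Finset.coe_Icc, Set.mem_Icc, Finset.mem_coe, Finset.mem_Icc] at hm
          have hNm : N < (m : WithBot ℤ) := lt_of_lt_of_le hNj (WithBot.coe_le_coe.2 hm.1)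
          have hsm := hpieceM m hNm hm.2 hm.1
          have : {s | M < v s} ∩ Ioo (xs (m - 1)) (xs m) ⊆
              {s | essSup v (volume.restrict (Ioo (xs (m - 1)) (xs m))) < v s} ∩
                Ioo (xs (m - 1)) (xs m) :=
            Set.inter_subset_inter_left _ (fun s hs => lt_of_le_of_lt hsm hs)
          refine measure_mono_null this ?_
          rw [← Measure.restrict_apply' measurableSet_Ioo]
          exact meas_essSup_lt
        · exact Set.Finite.measure_zero (Finset.finite_toSet _) volume
      have h2 : Vr r v (xs (j - 1)) ((xs k : ℝ) : EReal) ^ ρ ≤ 2 ^ (-(j:ℝ) * β) * D := by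
        rw [Vr, if_pos hr, erIoo_coe]
        calc essSup v (volume.restrict (Ioo (xs (j - 1)) (xs k))) ^ ρ ≤ M ^ ρ :=
            ENNReal.rpow_le_rpow hbig hρ0.le
          _ = 2 ^ (-(j:ℝ) * β) * D := by
            rw [hM, ← ENNReal.rpow_mul, one_div, inv_mul_cancel₀ hρ0.ne', ENNReal.rpow_one]
      calc (2:ℝ≥0∞) ^ ((j:ℝ) * β) * Vr r v (xs (j - 1)) ((xs k : ℝ) : EReal) ^ ρ
          ≤ 2 ^ ((j:ℝ) * β) * (2 ^ (-(j:ℝ) * β) * D) := mul_le_mul_right h2 _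
        _ = D := by
            rw [← mul_assoc, two_rpow_mul_two_rpow, neg_mul, add_neg_cancel, ENNReal.rpow_zero,
              one_mul]
        _ ≤ ENNReal.ofReal G * D := by
            rw [hGdef, if_pos hr]
            simp
    · -- r < 1 : integral case
      have hr' : r < 1 := lt_of_le_of_ne hr1 hr
      have hτ0 : 0 < τ := hτpos hr
      set g : ℝ → ℝ≥0∞ := fun s => v s ^ (1 / (1 - r)) with hg
      have hgmeas : Measurable g := ENNReal.continuous_rpow_const.measurable.comp hv
      set ν := volume.withDensity g with hν
      have hVreq : ∀ s u : ℝ, Vr r v s ((u : ℝ) : EReal) = ν (Ioo s u) ^ ((1 - r) / r) := by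
        intro s u
        rw [Vr, if_neg hr, erIoo_coe, hν, withDensity_apply _ measurableSet_Ioo]
      set x : ℝ≥0∞ := (2:ℝ≥0∞) ^ (-(β / τ)) with hx
      have ham : ∀ m : ℤ, N < (m : WithBot ℤ) → m ≤ k → j ≤ m →
          ν (Ioo (xs (m - 1)) (xs m)) ≤
            ((2:ℝ≥0∞) ^ (-(j:ℝ) * β) * D) ^ (1 / τ) * x ^ (m - j).toNat := by
        intro m hNm hmk hjm
        have h1 := hpiece m hNm hmk
        rw [hVreq, ← ENNReal.rpow_mul, ← hτdef] at h1
        have h2 : ν (Ioo (xs (m - 1)) (xs m)) ≤ ((2:ℝ≥0∞) ^ (-(m:ℝ) * β) * D) ^ (1 / τ) := by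
          calc ν (Ioo (xs (m - 1)) (xs m))
              = (ν (Ioo (xs (m - 1)) (xs m)) ^ τ) ^ (1 / τ) := by
                rw [← ENNReal.rpow_mul, mul_one_div, div_self hτ0.ne', ENNReal.rpow_one]
            _ ≤ _ := ENNReal.rpow_le_rpow h1 (by positivity)
        refine h2.trans (le_of_eq ?_)
        have hcast : (((m - j).toNat : ℝ)) = (m : ℝ) - (j : ℝ) := by
          have h' : ((m - j).toNat : ℤ) = m - j := Int.toNat_of_nonneg (by omega)
          exact_mod_cast h'
        calc ((2:ℝ≥0∞) ^ (-(m:ℝ) * β) * D) ^ (1 / τ)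
            = 2 ^ (-(m:ℝ) * β * (1 / τ)) * D ^ (1 / τ) := by
              rw [ENNReal.mul_rpow_of_nonneg _ _ (by positivity), ← ENNReal.rpow_mul]
          _ = 2 ^ (-(j:ℝ) * β * (1 / τ) + -(β / τ) * ((m - j).toNat : ℝ)) * D ^ (1 / τ) := by
              congr 2
              rw [hcast]
              field_simp
              ring
          _ = ((2:ℝ≥0∞) ^ (-(j:ℝ) * β * (1 / τ)) * D ^ (1 / τ)) * x ^ (m - j).toNat := by
              rw [← two_rpow_mul_two_rpow, hx, ← ENNReal.rpow_natCast ((2:ℝ≥0∞) ^ (-(β / τ))) _,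
                ← ENNReal.rpow_mul]
              ring
          _ = ((2:ℝ≥0∞) ^ (-(j:ℝ) * β) * D) ^ (1 / τ) * x ^ (m - j).toNat := by
              rw [ENNReal.mul_rpow_of_nonneg _ _ (by positivity), ← ENNReal.rpow_mul]
      have hsum : ν (Ioo (xs (j - 1)) (xs k)) ≤
          ((2:ℝ≥0∞) ^ (-(j:ℝ) * β) * D) ^ (1 / τ) * (1 - x)⁻¹ := by
        calc ν (Ioo (xs (j - 1)) (xs k))
            ≤ ν ((⋃ m ∈ Finset.Icc j k, Ioo (xs (m - 1)) (xs m)) ∪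
                (↑((Finset.Icc j k).image xs) : Set ℝ)) := measure_mono (decomp j hNj hjk)
          _ ≤ ν (⋃ m ∈ Finset.Icc j k, Ioo (xs (m - 1)) (xs m)) +
              ν (↑((Finset.Icc j k).image xs) : Set ℝ) := measure_union_le _ _
          _ = ν (⋃ m ∈ Finset.Icc j k, Ioo (xs (m - 1)) (xs m)) := by
              rw [(withDensity_absolutelyContinuous volume g)
                (Set.Finite.measure_zero (Finset.finite_toSet _) volume), add_zero]
          _ ≤ ∑ m ∈ Finset.Icc j k, ν (Ioo (xs (m - 1)) (xs m)) :=
              measure_biUnion_finset_le _ _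
          _ ≤ ∑ m ∈ Finset.Icc j k, ((2:ℝ≥0∞) ^ (-(j:ℝ) * β) * D) ^ (1 / τ) * x ^ (m - j).toNat := by
              refine Finset.sum_le_sum fun m hm => ?_
              simp only [Finset.mem_Icc] at hm
              exact ham m (lt_of_lt_of_le hNj (WithBot.coe_le_coe.2 hm.1)) hm.2 hm.1
          _ = ((2:ℝ≥0∞) ^ (-(j:ℝ) * β) * D) ^ (1 / τ) *
              ∑ m ∈ Finset.Icc j k, x ^ (m - j).toNat := by rw [Finset.mul_sum]
          _ ≤ _ := mul_le_mul_right (geom_sum_Icc_le x j k) _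
      have hVb : Vr r v (xs (j - 1)) ((xs k : ℝ) : EReal) ^ ρ ≤
          2 ^ (-(j:ℝ) * β) * D * ((1 - x)⁻¹) ^ τ := by
        rw [hVreq, ← ENNReal.rpow_mul, ← hτdef]
        calc ν (Ioo (xs (j - 1)) (xs k)) ^ τ
            ≤ (((2:ℝ≥0∞) ^ (-(j:ℝ) * β) * D) ^ (1 / τ) * (1 - x)⁻¹) ^ τ :=
              ENNReal.rpow_le_rpow hsum hτ0.le
          _ = 2 ^ (-(j:ℝ) * β) * D * ((1 - x)⁻¹) ^ τ := by
              rw [ENNReal.mul_rpow_of_nonneg _ _ hτ0.le, ← ENNReal.rpow_mul, one_div,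
                inv_mul_cancel₀ hτ0.ne', ENNReal.rpow_one]
      have hGx : ((1 - x)⁻¹) ^ τ = ENNReal.ofReal G := by
        have hx1 : x = ENNReal.ofReal ((2:ℝ) ^ (-(β / τ))) := by
          rw [hx, ← ENNReal.ofReal_rpow_of_pos two_pos]
          norm_num
        have h1x : (1:ℝ≥0∞) - x = ENNReal.ofReal (1 - (2:ℝ) ^ (-(β / τ))) := by
          rw [hx1, ENNReal.ofReal_sub _ hzpos.le, ENNReal.ofReal_one]
        rw [h1x, ← ENNReal.ofReal_inv_of_pos (by linarith [hzlt1 hr]),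
          ENNReal.ofReal_rpow_of_pos (inv_pos.2 (by linarith [hzlt1 hr])), hGdef, if_neg hr]
      calc (2:ℝ≥0∞) ^ ((j:ℝ) * β) * Vr r v (xs (j - 1)) ((xs k : ℝ) : EReal) ^ ρ
          ≤ 2 ^ ((j:ℝ) * β) * (2 ^ (-(j:ℝ) * β) * D * ((1 - x)⁻¹) ^ τ) := mul_le_mul_right hVb _
        _ = ((1 - x)⁻¹) ^ τ * D := by
            rw [← mul_assoc, ← mul_assoc, two_rpow_mul_two_rpow, neg_mul, add_neg_cancel,
              ENNReal.rpow_zero, one_mul]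
            ring
        _ = ENNReal.ofReal G * D := by rw [hGx]
  constructor
  · -- lower bound: ofReal K⁻¹ * essSup ≤ D
    by_cases hDt : D = ⊤
    · rw [hDt]; exact le_top
    have hE : essSup (fun t => Wf w b t ^ (-β) * Vr r v t ((xs k : ℝ) : EReal) ^ ρ)
        (volume.restrict (Ioo a (xs k))) ≤ ENNReal.ofReal K * D := by
      refine essSup_le_of_ae_le _ ?_
      filter_upwards [ae_restrict_mem measurableSet_Ioo] with t ht
      obtain ⟨m0, hNm0, hm0t⟩ := start t ht.1 ht.2
      obtain ⟨j, hm0j, hjk, hj1, hj2⟩ := cover m0 hNm0 t hm0t ht.2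
      have hNj : N < (j : WithBot ℤ) := lt_of_le_of_lt hNm0 (WithBot.coe_lt_coe.2 hm0j)
      have hWt : ENNReal.ofReal c₁ * 2 ^ (-(j:ℝ)) ≤ Wf w b t :=
        le_trans (hWx j hNj.le).1 (Wf_anti w b hj2.le)
      have h1 : Wf w b t ^ (-β) ≤ ENNReal.ofReal (c₁ ^ (-β)) * 2 ^ ((j:ℝ) * β) := by
        refine le_trans (rpow_neg_anti hWt hβ0.le) (le_of_eq ?_)
        rw [ofReal_mul_two_rpow hc₁]
        congr 2
        ring
      have h2 : Vr r v t ((xs k : ℝ) : EReal) ^ ρ ≤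
          Vr r v (xs (j - 1)) ((xs k : ℝ) : EReal) ^ ρ :=
        ENNReal.rpow_le_rpow (Vr_anti r hr0 hr1 v hj1 _) hρ0.le
      calc Wf w b t ^ (-β) * Vr r v t ((xs k : ℝ) : EReal) ^ ρ
          ≤ (ENNReal.ofReal (c₁ ^ (-β)) * 2 ^ ((j:ℝ) * β)) *
              Vr r v (xs (j - 1)) ((xs k : ℝ) : EReal) ^ ρ := mul_le_mul' h1 h2
        _ = ENNReal.ofReal (c₁ ^ (-β)) *
              (2 ^ ((j:ℝ) * β) * Vr r v (xs (j - 1)) ((xs k : ℝ) : EReal) ^ ρ) := mul_assoc _ _ _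
        _ ≤ ENNReal.ofReal (c₁ ^ (-β)) * (ENNReal.ofReal G * D) :=
            mul_le_mul_right (main j hNj hjk) _
        _ = ENNReal.ofReal K * D := by
            rw [← mul_assoc, ← ENNReal.ofReal_mul (Real.rpow_pos_of_pos hc₁ _).le, hKdef]
    calc ENNReal.ofReal K⁻¹ * essSup (fun t => Wf w b t ^ (-β) *
            Vr r v t ((xs k : ℝ) : EReal) ^ ρ) (volume.restrict (Ioo a (xs k)))
        ≤ ENNReal.ofReal K⁻¹ * (ENNReal.ofReal K * D) := mul_le_mul_right hE _
      _ = D := by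
          rw [← mul_assoc, ← ENNReal.ofReal_mul (inv_pos.2 hK0).le, inv_mul_cancel₀ hK0.ne',
            ENNReal.ofReal_one, one_mul]
  · -- upper bound
    refine iSup_le ?_
    rintro ⟨i, hNi, hik⟩
    have hNi1 : N ≤ ((i - 1 : ℤ) : WithBot ℤ) := hNlt hNi
    have hx1i : xs (i - 1) < xs i := hstrict _ _ hNi1 (by omega)
    have hxik : xs i ≤ xs k := mono i k hNi.le hik
    have hax : a ≤ xs (i - 1) := (hrange _ hNi1).1
    set c' : ℝ≥0∞ := ENNReal.ofReal (c₂ ^ (-β)) * 2 ^ (((i:ℝ) - 1) * β) with hc'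
    have hpt : ∀ t ∈ Ioo (xs (i - 1)) (xs i),
        c' * Vr r v t ((xs i : ℝ) : EReal) ^ ρ ≤
          Wf w b t ^ (-β) * Vr r v t ((xs k : ℝ) : EReal) ^ ρ := by
      intro t ht
      have hWt : Wf w b t ≤ ENNReal.ofReal c₂ * 2 ^ (-((i:ℝ) - 1)) := by
        refine le_trans (Wf_anti w b ht.1.le) (le_trans (hWx (i - 1) hNi1).2 (le_of_eq ?_))
        congr 2
        push_cast
        ring
      have h1 : c' ≤ Wf w b t ^ (-β) := by
        refine le_trans (le_of_eq ?_) (rpow_neg_anti hWt hβ0.le)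
        rw [ofReal_mul_two_rpow hc₂, hc']
        congr 2
        ring
      exact mul_le_mul' h1 (ENNReal.rpow_le_rpow
        (Vr_mono_right r hr0 hr1 v t (EReal.coe_le_coe_iff.2 hxik)) hρ0.le)
    have hE2 : c' * essSup (fun t => Vr r v t ((xs i : ℝ) : EReal) ^ ρ)
          (volume.restrict (Ioo (xs (i - 1)) (xs i))) ≤
        essSup (fun t => Wf w b t ^ (-β) * Vr r v t ((xs k : ℝ) : EReal) ^ ρ)
          (volume.restrict (Ioo (xs (i - 1)) (xs i))) := by
      rw [← ENNReal.essSup_const_mul]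
      refine essSup_mono_ae ?_
      filter_upwards [ae_restrict_mem measurableSet_Ioo] with t ht using hpt t ht
    have hE1 : essSup (fun t => Wf w b t ^ (-β) * Vr r v t ((xs k : ℝ) : EReal) ^ ρ)
          (volume.restrict (Ioo (xs (i - 1)) (xs i))) ≤
        essSup (fun t => Wf w b t ^ (-β) * Vr r v t ((xs k : ℝ) : EReal) ^ ρ)
          (volume.restrict (Ioo a (xs k))) :=
      essSup_mono_measure (Measure.absolutelyContinuous_of_le (Measure.restrict_mono
        (fun t ht => Set.mem_Ioo.2 ⟨lt_of_le_of_lt hax (Set.mem_Ioo.1 ht).1,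
          lt_of_lt_of_le (Set.mem_Ioo.1 ht).2 hxik⟩) le_rfl))
    have hE3 := essSup_piece_ge hr0 hr1 hv hx1i hρ0 (v := v)
    have hfinal : c' * Vr r v (xs (i - 1)) ((xs i : ℝ) : EReal) ^ ρ ≤
        essSup (fun t => Wf w b t ^ (-β) * Vr r v t ((xs k : ℝ) : EReal) ^ ρ)
          (volume.restrict (Ioo a (xs k))) :=
      le_trans (mul_le_mul_right hE3 c') (le_trans hE2 hE1)
    have hCc' : ENNReal.ofReal (c₂ ^ β * 2 ^ β) * c' = 2 ^ ((i:ℝ) * β) := by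
      rw [hc', ENNReal.ofReal_mul (Real.rpow_pos_of_pos hc₂ _).le,
        ← ENNReal.ofReal_rpow_of_pos two_pos, ENNReal.ofReal_ofNat,
        mul_mul_mul_comm, ← ENNReal.ofReal_mul (Real.rpow_pos_of_pos hc₂ _).le,
        ← Real.rpow_add hc₂, add_neg_cancel, Real.rpow_zero, ENNReal.ofReal_one, one_mul,
        two_rpow_mul_two_rpow]
      congr 1
      ring
    calc (2:ℝ≥0∞) ^ ((i:ℝ) * β) * Vr r v (xs (i - 1)) ((xs i : ℝ) : EReal) ^ ρ
        = ENNReal.ofReal (c₂ ^ β * 2 ^ β) *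
            (c' * Vr r v (xs (i - 1)) ((xs i : ℝ) : EReal) ^ ρ) := by rw [← mul_assoc, hCc']
      _ ≤ ENNReal.ofReal (c₂ ^ β * 2 ^ β) * essSup (fun t => Wf w b t ^ (-β) *
            Vr r v t ((xs k : ℝ) : EReal) ^ ρ) (volume.restrict (Ioo a (xs k))) :=
          mul_le_mul_right hfinal _
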